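/- For any binary phylogenetic network N over a finite leaf set X, there exists a finite leaf set X⁺ ⊇ X and a tree-based binary phylogenetic network N⁺ over X⁺ such that N is obtained from N⁺ by deleting all vertices and arcs of N⁺ that do not lie on a directed path ending at a leaf in X, and then suppressing every resulting vertex of in-degree 1 and out-degree 1 (i.e., N = N⁺|X). -/

import Mathlib

/-! Directed multigraphs, walks, and binary phylogenetic networks
(following Francis & Steel, "Which phylogenetic networks are merely
trees with additional arcs?"). -/

universe u1 u2 u3 u4 u5 u6 u7

/-- In-degree of `v`: the number of arcs with target `v`. -/
noncomputable def InDeg {V : Type u2} {A : Type u3} (t : A → V) (v : V) : ℕ := {a : A | t a = v}.ncard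

/-- Out-degree of `v`: the number of arcs with source `v`. -/
noncomputable def OutDeg {V : Type u2} {A : Type u3} (s : A → V) (v : V) : ℕ := {a : A | s a = v}.ncard

/-- In-degree of `v` in the sub-digraph with arc set `A₀`. -/
noncomputable def InDegIn {V : Type u2} {A : Type u3} (t : A → V) (A₀ : Set A) (v : V) : ℕ :=
  {a : A | a ∈ A₀ ∧ t a = v}.ncard

/-- Out-degree of `v` in the sub-digraph with arc set `A₀`. -/
noncomputable def OutDegIn {V : Type u2} {A : Type u3} (s : A → V) (A₀ : Set A) (v : V) : ℕ :=
  {a : A | a ∈ A₀ ∧ s a = v}.ncard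

/-- `ArcWalk s t u p v` : the list of arcs `p` is a directed walk from `u` to `v`
(consecutive arcs are compatible). -/
inductive ArcWalk {V : Type u2} {A : Type u3} (s t : A → V) : V → List A → V → Prop
  | nil (v : V) : ArcWalk s t v [] v
  | cons {u w : V} {a : A} {p : List A} :
      s a = u → ArcWalk s t (t a) p w → ArcWalk s t u (a :: p) w

/-- The digraph `(V, S)` is a rooted directed tree with root `r`: every vertex of `V`
is reachable from `r` by a unique directed path using only arcs in `S`. -/
def IsRootedTree {V : Type u2} {A : Type u3} (s t : A → V) (S : Set A) (r : V) : Prop :=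
  ∀ v : V, ∃! p : List A, (∀ a ∈ p, a ∈ S) ∧ ArcWalk s t r p v

/-- `(V₀, A₀)` is a rooted directed tree with root `r` (as a sub-digraph of the
ambient digraph given by `s`, `t`). -/
def IsRootedTreeOn {V : Type u2} {A : Type u3} (s t : A → V) (V₀ : Set V) (A₀ : Set A)
    (r : V) : Prop :=
  r ∈ V₀ ∧ (∀ a ∈ A₀, s a ∈ V₀ ∧ t a ∈ V₀) ∧
    ∀ v ∈ V₀, ∃! p : List A, (∀ a ∈ p, a ∈ A₀) ∧ ArcWalk s t r p v

/-- A set of arcs is independent if no two distinct arcs of it share a vertex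
(the vertices of an arc `a` being `s a` and `t a`). -/
def IndepArcs {V : Type u2} {A : Type u3} (s t : A → V) (I : Set A) : Prop :=
  ∀ a ∈ I, ∀ b ∈ I, a ≠ b → s a ≠ s b ∧ s a ≠ t b ∧ t a ≠ s b ∧ t a ≠ t b

/-- A binary phylogenetic network over the (finite) leaf set `X`: a finite acyclic
directed multigraph whose out-degree-0 vertices are exactly the (images of the)
elements of `X`, each leaf has in-degree 1, there is a unique in-degree-0 vertex
(the root) of out-degree 1 or 2, and every other vertex has in-degree 2 and
out-degree 1, or in-degree 1 and out-degree 2. -/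
structure PhyloNetwork (X : Type u1) (V : Type u2) (A : Type u3) where
  src : A → V
  tgt : A → V
  leafEmb : X → V
  root : V
  finV : Finite V
  finA : Finite A
  leafEmb_inj : Function.Injective leafEmb
  acyclic : ∀ (v : V) (p : List A), p ≠ [] → ¬ ArcWalk src tgt v p v
  leaf_iff : ∀ v : V, (∃ x : X, leafEmb x = v) ↔ OutDeg src v = 0
  leaf_indeg : ∀ x : X, InDeg tgt (leafEmb x) = 1
  root_indeg : InDeg tgt root = 0
  root_unique : ∀ v : V, InDeg tgt v = 0 → v = root
  root_outdeg : OutDeg src root = 1 ∨ OutDeg src root = 2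
  deg_other : ∀ v : V, v ≠ root → (¬ ∃ x : X, leafEmb x = v) →
    (InDeg tgt v = 2 ∧ OutDeg src v = 1) ∨ (InDeg tgt v = 1 ∧ OutDeg src v = 2)

namespace PhyloNetwork

variable {X : Type u1} {V : Type u2} {A : Type u3}

/-- The set of leaves of the network (the copy of `X` inside `V`). -/
def leaves (N : PhyloNetwork X V A) : Set V := Set.range N.leafEmb

/-- `S ⊆ A` is a support tree for `N`: the digraph `(V, S)` is a rooted directed
tree with root `N.root` whose out-degree-0 vertices are exactly the leaves. -/
def IsSupportTree (N : PhyloNetwork X V A) (S : Set A) : Prop :=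
  IsRootedTree N.src N.tgt S N.root ∧
    ∀ v : V, OutDegIn N.src S v = 0 ↔ v ∈ N.leaves

/-- `N` is tree-based if it has a support tree. -/
def TreeBased (N : PhyloNetwork X V A) : Prop := ∃ S : Set A, N.IsSupportTree S

/-- `S₁`: the arcs whose source has out-degree 1 or whose target has in-degree 1. -/
def S1 (N : PhyloNetwork X V A) : Set A :=
  {a : A | OutDeg N.src (N.src a) = 1 ∨ InDeg N.tgt (N.tgt a) = 1}

/-- `S` is admissible: it contains `S₁`, every in-degree-2 vertex has exactly one
incoming arc in `S` (C₁), and every out-degree-2 vertex has at least one outgoing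
arc in `S` (C₂). -/
def Admissible (N : PhyloNetwork X V A) (S : Set A) : Prop :=
  N.S1 ⊆ S ∧
    (∀ v : V, InDeg N.tgt v = 2 → ∃! a : A, a ∈ S ∧ N.tgt a = v) ∧
    (∀ v : V, OutDeg N.src v = 2 → ∃ a ∈ S, N.src a = v)

/-- An antichain: no directed path from one element to another distinct element. -/
def IsAntichainIn (N : PhyloNetwork X V A) (𝒜 : Set V) : Prop :=
  ∀ u ∈ 𝒜, ∀ v ∈ 𝒜, u ≠ v → ∀ p : List A, ¬ ArcWalk N.src N.tgt u p v

/-- The antichain-to-leaf property: from every antichain of non-leaf vertices there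
is a family of pairwise arc-disjoint directed paths to leaves. -/
def AntichainToLeaf (N : PhyloNetwork X V A) : Prop :=
  ∀ 𝒜 : Set V, (∀ v ∈ 𝒜, v ∉ N.leaves) → N.IsAntichainIn 𝒜 →
    ∃ p : V → List A,
      (∀ v ∈ 𝒜, ∃ w ∈ N.leaves, ArcWalk N.src N.tgt v (p v) w) ∧
      (∀ u ∈ 𝒜, ∀ v ∈ 𝒜, u ≠ v → ∀ a ∈ p u, a ∉ p v)

end PhyloNetwork

/-- The sub-digraph `(V₀, A₀)` of the digraph given by `s, t` is a subdivision of the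
digraph given by `s', t'`, realized by the vertex map `φV`: the vertices of the target
digraph correspond exactly to the vertices of `(V₀, A₀)` that do not have in-degree 1
and out-degree 1, and each target arc corresponds to a directed path of `(V₀, A₀)`
with all internal vertices suppressed, these paths partitioning `A₀`. Equivalently,
the target digraph is obtained from `(V₀, A₀)` by repeatedly suppressing all vertices
of in-degree 1 and out-degree 1. -/
def SubdivOn {V : Type u2} {A : Type u3} {V' : Type u4} {A' : Type u5}
    (s t : A → V) (V₀ : Set V) (A₀ : Set A) (s' t' : A' → V') (φV : V' → V) : Prop :=
  Function.Injective φV ∧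
  (∀ v' : V', φV v' ∈ V₀) ∧
  (∀ a ∈ A₀, s a ∈ V₀ ∧ t a ∈ V₀) ∧
  (∀ v ∈ V₀, v ∈ Set.range φV ↔ ¬ (InDegIn t A₀ v = 1 ∧ OutDegIn s A₀ v = 1)) ∧
  ∃ φA : A' → List A,
    (∀ e : A', φA e ≠ [] ∧ (φA e).Nodup ∧ (∀ a ∈ φA e, a ∈ A₀) ∧
      ArcWalk s t (φV (s' e)) (φA e) (φV (t' e)) ∧
      ∀ a ∈ (φA e).dropLast, t a ∉ Set.range φV) ∧
    (∀ a ∈ A₀, ∃! e : A', a ∈ φA e)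

/-- A rooted binary phylogenetic `X`-tree: a binary phylogenetic network over `X`
with no vertices of in-degree 2. -/
def IsPhyloTree {X : Type u1} {V : Type u2} {A : Type u3}
    (T : PhyloNetwork X V A) : Prop :=
  ∀ v : V, InDeg T.tgt v ≠ 2

/-- `N` is based on the tree `T`: `N` has a support tree `S` such that `(V, S)` is a
subdivision of `T`, matching roots and leaf labels. -/
def BasedOn {X : Type u1} {V : Type u2} {A : Type u3} {V' : Type u4} {A' : Type u5}
    (N : PhyloNetwork X V A) (T : PhyloNetwork X V' A') : Prop :=
  ∃ (S : Set A) (φV : V' → V),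
    N.IsSupportTree S ∧
    SubdivOn N.src N.tgt Set.univ S T.src T.tgt φV ∧
    φV T.root = N.root ∧
    ∀ x : X, φV (T.leafEmb x) = N.leafEmb x

/-- `N` displays the tree `T`: there are `V₀ ⊆ V` and `A₀ ⊆ A` forming a rooted
directed tree whose out-degree-0 vertices are exactly the leaves of `N`, such that
`T` is obtained from `(V₀, A₀)` by repeatedly suppressing vertices of in-degree 1 and
out-degree 1 and deleting the root together with its outgoing arc so long as the root
has out-degree 1 (the deleted root chain is the path `p₀`). -/
def Displays {X : Type u1} {V : Type u2} {A : Type u3} {V' : Type u4} {A' : Type u5}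
    (N : PhyloNetwork X V A) (T : PhyloNetwork X V' A') : Prop :=
  ∃ (V₀ : Set V) (A₀ : Set A) (r₀ : V) (φV : V' → V) (p₀ : List A) (φA : A' → List A),
    IsRootedTreeOn N.src N.tgt V₀ A₀ r₀ ∧
    (∀ v ∈ V₀, OutDegIn N.src A₀ v = 0 ↔ v ∈ N.leaves) ∧
    Function.Injective φV ∧
    (∀ v' : V', φV v' ∈ V₀) ∧
    (∀ x : X, φV (T.leafEmb x) = N.leafEmb x) ∧
    p₀.Nodup ∧ (∀ a ∈ p₀, a ∈ A₀) ∧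
    ArcWalk N.src N.tgt r₀ p₀ (φV T.root) ∧
    (∀ a ∈ p₀, OutDegIn N.src A₀ (N.src a) = 1 ∧ N.src a ∉ Set.range φV) ∧
    (∀ e : A', φA e ≠ [] ∧ (φA e).Nodup ∧ (∀ a ∈ φA e, a ∈ A₀) ∧
      ArcWalk N.src N.tgt (φV (T.src e)) (φA e) (φV (T.tgt e)) ∧
      ∀ a ∈ (φA e).dropLast, N.tgt a ∉ Set.range φV) ∧
    (∀ a ∈ A₀, (a ∈ p₀ ∧ ∀ e : A', a ∉ φA e) ∨ (a ∉ p₀ ∧ ∃! e : A', a ∈ φA e))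

/-- The vertices of `N` having a directed path (possibly trivial) to a vertex in `L`. -/
def KeepV {X : Type u1} {V : Type u2} {A : Type u3}
    (N : PhyloNetwork X V A) (L : Set V) : Set V :=
  {v : V | ∃ (p : List A) (w : V), w ∈ L ∧ ArcWalk N.src N.tgt v p w}

/-- The arcs of `N` lying on a directed path ending at a vertex in `L`. -/
def KeepA {X : Type u1} {V : Type u2} {A : Type u3}
    (N : PhyloNetwork X V A) (L : Set V) : Set A :=
  {a : A | ∃ (p : List A) (w : V), w ∈ L ∧ ArcWalk N.src N.tgt (N.tgt a) p w}

namespace S2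

variable {V : Type u2} {A : Type u3}

theorem arcWalk_append {s t : A → V} {u v w : V} {p q : List A}
    (h1 : ArcWalk s t u p v) (h2 : ArcWalk s t v q w) : ArcWalk s t u (p ++ q) w := by
  induction h1 with
  | nil => simpa using h2
  | cons hs _ ih => exact ArcWalk.cons hs (ih h2)

theorem arcWalk_concat {s t : A → V} {u w : V} {p : List A} (h : ArcWalk s t u p w)
    (hp : p ≠ []) : ∃ q a, p = q ++ [a] ∧ t a = w ∧ ArcWalk s t u q (s a) := by
  induction h with
  | nil => exact absurd rfl hp
  | @cons u' w' a p' hs h ih =>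
    rcases eq_or_ne p' [] with rfl | hne
    · cases h
      exact ⟨[], a, by simp, rfl, hs ▸ ArcWalk.nil _⟩
    · obtain ⟨q, b, rfl, hb, hw⟩ := ih hne
      exact ⟨a :: q, b, rfl, hb, ArcWalk.cons hs hw⟩

theorem arcWalk_nil_eq {s t : A → V} {u w : V} (h : ArcWalk s t u [] w) : u = w := by
  cases h; rfl

theorem arcWalk_map {V' : Type u4} {A' : Type u5} {s t : A → V} {s' t' : A' → V'}
    {f : A → A'} {g : V → V'} (hs : ∀ a, s' (f a) = g (s a)) (ht : ∀ a, t' (f a) = g (t a))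
    {u v : V} {p : List A} (h : ArcWalk s t u p v) :
    ArcWalk s' t' (g u) (p.map f) (g v) := by
  induction h with
  | nil => exact ArcWalk.nil _
  | @cons u' w' a p' hsa _ ih =>
    exact ArcWalk.cons (by rw [hs, hsa]) (by rw [ht]; exact ih)

/-- Any transitive chain of arcs gives a nonempty walk. -/
theorem transGen_walk {s t : A → V} {u v : V}
    (h : Relation.TransGen (fun x y => ∃ a, s a = x ∧ t a = y) u v) :
    ∃ p : List A, p ≠ [] ∧ ArcWalk s t u p v := by
  induction h with
  | single h =>
    obtain ⟨a, ha1, ha2⟩ := h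
    exact ⟨[a], by simp, ArcWalk.cons ha1 (ha2 ▸ ArcWalk.nil _)⟩
  | tail _ h ih =>
    obtain ⟨a, ha1, ha2⟩ := h
    obtain ⟨p, hp, hw⟩ := ih
    exact ⟨p ++ [a], by simp, arcWalk_append hw (ArcWalk.cons ha1 (ha2 ▸ ArcWalk.nil _))⟩

/-- Forward version, for walking to leaves: chains in the reverse relation. -/
theorem transGen_walk_rev {s t : A → V} {u v : V}
    (h : Relation.TransGen (fun x y => ∃ a, t a = x ∧ s a = y) u v) :
    ∃ p : List A, p ≠ [] ∧ ArcWalk s t v p u := by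
  induction h with
  | single h =>
    obtain ⟨a, ha1, ha2⟩ := h
    exact ⟨[a], by simp, ArcWalk.cons ha2 (ha1 ▸ ArcWalk.nil _)⟩
  | tail _ h ih =>
    obtain ⟨a, ha1, ha2⟩ := h
    obtain ⟨p, hp, hw⟩ := ih
    exact ⟨a :: p, by simp, ArcWalk.cons ha2 (ha1 ▸ hw)⟩

theorem wf_pred {s t : A → V} [Finite V]
    (acyc : ∀ (v : V) (p : List A), p ≠ [] → ¬ ArcWalk s t v p v) :
    WellFounded (Relation.TransGen (fun x y => ∃ a, s a = x ∧ t a = y)) := by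
  have : IsTrans V (Relation.TransGen (fun x y => ∃ a, s a = x ∧ t a = y)) :=
    ⟨fun _ _ _ h1 h2 => h1.trans h2⟩
  have : IsIrrefl V (Relation.TransGen (fun x y => ∃ a, s a = x ∧ t a = y)) := by
    constructor
    intro v hv
    obtain ⟨p, hp, hw⟩ := transGen_walk hv
    exact acyc v p hp hw
  exact Finite.wellFounded_of_trans_of_irrefl _

theorem wf_succ {s t : A → V} [Finite V]
    (acyc : ∀ (v : V) (p : List A), p ≠ [] → ¬ ArcWalk s t v p v) :
    WellFounded (Relation.TransGen (fun x y => ∃ a, t a = x ∧ s a = y)) := by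
  have : IsTrans V (Relation.TransGen (fun x y => ∃ a, t a = x ∧ s a = y)) :=
    ⟨fun _ _ _ h1 h2 => h1.trans h2⟩
  have : IsIrrefl V (Relation.TransGen (fun x y => ∃ a, t a = x ∧ s a = y)) := by
    constructor
    intro v hv
    obtain ⟨p, hp, hw⟩ := transGen_walk_rev hv
    exact acyc v p hp hw
  exact Finite.wellFounded_of_trans_of_irrefl _

/-- If every non-root vertex has a unique incoming `S`-arc, the root has none,
and the digraph is acyclic, then `(V,S)` is a rooted tree. -/
theorem isRootedTree_of_unique_in {s t : A → V} [Finite V] {S : Set A} {r : V}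
    (acyc : ∀ (v : V) (p : List A), p ≠ [] → ¬ ArcWalk s t v p v)
    (hin : ∀ v : V, v ≠ r → ∃! a : A, a ∈ S ∧ t a = v)
    (hr : ∀ a ∈ S, t a ≠ r) : IsRootedTree s t S r := by
  intro v
  -- existence
  have hex : ∀ v : V, ∃ p : List A, (∀ a ∈ p, a ∈ S) ∧ ArcWalk s t r p v := by
    intro v
    induction v using (wf_pred acyc).induction with
    | _ v ih =>
      rcases eq_or_ne v r with rfl | hv
      · exact ⟨[], by simp, ArcWalk.nil _⟩
      · obtain ⟨a, ⟨haS, hat⟩, -⟩ := hin v hv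
        obtain ⟨p, hpS, hw⟩ := ih (s a) (Relation.TransGen.single ⟨a, rfl, hat⟩)
        refine ⟨p ++ [a], ?_, arcWalk_append hw (ArcWalk.cons rfl (hat ▸ ArcWalk.nil _))⟩
        intro b hb
        rcases List.mem_append.mp hb with hb | hb
        · exact hpS b hb
        · simpa using (List.mem_singleton.mp hb) ▸ haS
  -- uniqueness
  have huniq : ∀ (n : ℕ) (v : V) (p q : List A), p.length ≤ n →
      (∀ a ∈ p, a ∈ S) → ArcWalk s t r p v →
      (∀ a ∈ q, a ∈ S) → ArcWalk s t r q v → p = q := by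
    intro n
    induction n with
    | zero =>
      intro v p q hlen hpS hpw hqS hqw
      have hp : p = [] := List.length_eq_zero_iff.mp (Nat.le_zero.mp hlen)
      subst hp
      have : r = v := arcWalk_nil_eq hpw
      subst this
      rcases eq_or_ne q [] with rfl | hq
      · rfl
      · exact absurd hqw (acyc _ q hq)
    | succ n ih =>
      intro v p q hlen hpS hpw hqS hqw
      rcases eq_or_ne v r with rfl | hv
      · rcases eq_or_ne p [] with rfl | hp
        · rcases eq_or_ne q [] with rfl | hq
          · rfl
          · exact absurd hqw (acyc _ q hq)
        · exact absurd hpw (acyc _ p hp)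
      · have hp : p ≠ [] := by rintro rfl; exact hv (arcWalk_nil_eq hpw).symm
        have hq : q ≠ [] := by rintro rfl; exact hv (arcWalk_nil_eq hqw).symm
        obtain ⟨p', a, rfl, hta, hwp⟩ := arcWalk_concat hpw hp
        obtain ⟨q', b, rfl, htb, hwq⟩ := arcWalk_concat hqw hq
        have haS : a ∈ S := hpS a (by simp)
        have hbS : b ∈ S := hqS b (by simp)
        obtain ⟨c, -, hc⟩ := hin v hv
        have hab : a = b := (hc a ⟨haS, hta⟩).trans (hc b ⟨hbS, htb⟩).symm
        subst hab
        have hlen' : p'.length ≤ n := by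
          have := hlen; simp at this; omega
        rw [ih (s a) p' q' hlen' (fun x hx => hpS x (by simp [hx]))
          hwp (fun x hx => hqS x (by simp [hx])) hwq]
  obtain ⟨p, hp⟩ := hex v
  exact ⟨p, hp, fun q hq => huniq q.length v q p le_rfl hq.1 hq.2 hp.1 hp.2⟩

end S2
namespace S2

variable {V : Type u2} {A : Type u3} {Vp : Type u4} {Ap : Type u5}

theorem conj_set_eq (s : A → V) (eV : V ≃ Vp) (eA : A ≃ Ap) (v : Vp) :
    {a : Ap | (eV ∘ s ∘ eA.symm) a = v} = eA '' {a : A | s a = eV.symm v} := by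
  ext a'
  simp only [Set.mem_setOf_eq, Set.mem_image, Function.comp_apply]
  constructor
  · intro h
    exact ⟨eA.symm a', eV.eq_symm_apply.mpr h, by simp⟩
  · rintro ⟨a, ha, rfl⟩
    simp [ha]

theorem conj_setIn_eq (s : A → V) (A₀ : Set A) (eV : V ≃ Vp) (eA : A ≃ Ap) (v : Vp) :
    {a : Ap | a ∈ eA '' A₀ ∧ (eV ∘ s ∘ eA.symm) a = v} =
      eA '' {a : A | a ∈ A₀ ∧ s a = eV.symm v} := by
  ext a'
  simp only [Set.mem_setOf_eq, Set.mem_image, Function.comp_apply]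
  constructor
  · rintro ⟨⟨a, ha, rfl⟩, h⟩
    exact ⟨a, ⟨ha, eV.eq_symm_apply.mpr (by simpa using h)⟩, rfl⟩
  · rintro ⟨a, ⟨ha, h⟩, rfl⟩
    exact ⟨⟨a, ha, rfl⟩, by simp [h]⟩

theorem outDeg_conj (s : A → V) (eV : V ≃ Vp) (eA : A ≃ Ap) (v : Vp) :
    OutDeg (eV ∘ s ∘ eA.symm) v = OutDeg s (eV.symm v) := by
  unfold OutDeg
  rw [conj_set_eq s eV eA v, Set.ncard_image_of_injective _ eA.injective]

theorem inDeg_conj (t : A → V) (eV : V ≃ Vp) (eA : A ≃ Ap) (v : Vp) :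
    InDeg (eV ∘ t ∘ eA.symm) v = InDeg t (eV.symm v) := by
  unfold InDeg
  rw [conj_set_eq t eV eA v, Set.ncard_image_of_injective _ eA.injective]

theorem outDegIn_conj (s : A → V) (A₀ : Set A) (eV : V ≃ Vp) (eA : A ≃ Ap) (v : Vp) :
    OutDegIn (eV ∘ s ∘ eA.symm) (eA '' A₀) v = OutDegIn s A₀ (eV.symm v) := by
  unfold OutDegIn
  rw [conj_setIn_eq s A₀ eV eA v, Set.ncard_image_of_injective _ eA.injective]

theorem inDegIn_conj (t : A → V) (A₀ : Set A) (eV : V ≃ Vp) (eA : A ≃ Ap) (v : Vp) :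
    InDegIn (eV ∘ t ∘ eA.symm) (eA '' A₀) v = InDegIn t A₀ (eV.symm v) := by
  unfold InDegIn
  rw [conj_setIn_eq t A₀ eV eA v, Set.ncard_image_of_injective _ eA.injective]

theorem arcWalk_conj {s t : A → V} (eV : V ≃ Vp) (eA : A ≃ Ap) {u v : V} {p : List A}
    (h : ArcWalk s t u p v) :
    ArcWalk (eV ∘ s ∘ eA.symm) (eV ∘ t ∘ eA.symm) (eV u) (p.map eA) (eV v) :=
  arcWalk_map (f := eA) (g := eV) (by simp) (by simp) h

theorem arcWalk_conj_back {s t : A → V} (eV : V ≃ Vp) (eA : A ≃ Ap) {u v : Vp} {p : List Ap}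
    (h : ArcWalk (eV ∘ s ∘ eA.symm) (eV ∘ t ∘ eA.symm) u p v) :
    ArcWalk s t (eV.symm u) (p.map eA.symm) (eV.symm v) :=
  arcWalk_map (f := eA.symm) (g := eV.symm) (by simp) (by simp) h

theorem isRootedTree_conj {s t : A → V} {S : Set A} {r : V} (eV : V ≃ Vp) (eA : A ≃ Ap)
    (h : IsRootedTree s t S r) :
    IsRootedTree (eV ∘ s ∘ eA.symm) (eV ∘ t ∘ eA.symm) (eA '' S) (eV r) := by
  intro v
  obtain ⟨p, ⟨hpS, hpw⟩, hpu⟩ := h (eV.symm v)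
  refine ⟨p.map eA, ⟨?_, by simpa using arcWalk_conj eV eA hpw⟩, ?_⟩
  · intro a ha
    obtain ⟨b, hb, rfl⟩ := List.mem_map.mp ha
    exact Set.mem_image_of_mem _ (hpS b hb)
  · rintro q ⟨hqS, hqw⟩
    have hw' := arcWalk_conj_back eV eA hqw
    simp only [Equiv.symm_apply_apply] at hw'
    have hmem : ∀ a ∈ q.map eA.symm, a ∈ S := by
      intro a ha
      obtain ⟨b, hb, rfl⟩ := List.mem_map.mp ha
      obtain ⟨c, hc, rfl⟩ := hqS b hb
      simpa using hc
    have := hpu (q.map eA.symm) ⟨hmem, hw'⟩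
    have : (q.map eA.symm).map eA = p.map eA := by rw [this]
    simpa [List.map_map] using this

/-- Transport of `SubdivOn` along equivalences on the ambient digraph. -/
theorem subdivOn_conj {V' : Type u6} {A' : Type u7}
    {s t : A → V} {V₀ : Set V} {A₀ : Set A} {s' t' : A' → V'} {φV : V' → V}
    (eV : V ≃ Vp) (eA : A ≃ Ap)
    (h : SubdivOn s t V₀ A₀ s' t' φV) :
    SubdivOn (eV ∘ s ∘ eA.symm) (eV ∘ t ∘ eA.symm) (eV '' V₀) (eA '' A₀) s' t'
      (eV ∘ φV) := by
  obtain ⟨hinj, hmem, hend, hrange, φA, hφA, huniq⟩ := h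
  have hrangeconj : Set.range (eV ∘ φV) = eV '' Set.range φV := by
    rw [Set.range_comp]
  refine ⟨eV.injective.comp hinj, fun v' => Set.mem_image_of_mem _ (hmem v'), ?_, ?_, ?_⟩
  · rintro a ⟨b, hb, rfl⟩
    simp only [Function.comp_apply, Equiv.symm_apply_apply]
    exact ⟨Set.mem_image_of_mem _ (hend b hb).1, Set.mem_image_of_mem _ (hend b hb).2⟩
  · rintro v ⟨v₀, hv₀, rfl⟩
    rw [hrangeconj, inDegIn_conj, outDegIn_conj]
    simp only [Equiv.symm_apply_apply]
    rw [eV.injective.mem_set_image]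
    exact hrange v₀ hv₀
  · refine ⟨fun e => (φA e).map eA, fun e => ?_, ?_⟩
    · obtain ⟨hne, hnd, hsub, hw, hlast⟩ := hφA e
      refine ⟨by simpa using hne, List.Nodup.map eA.injective hnd, ?_, ?_, ?_⟩
      · intro a ha
        obtain ⟨b, hb, rfl⟩ := List.mem_map.mp ha
        exact Set.mem_image_of_mem _ (hsub b hb)
      · exact arcWalk_conj eV eA hw
      · intro a ha
        rw [← List.map_dropLast] at ha
        obtain ⟨b, hb, rfl⟩ := List.mem_map.mp ha
        simp only [Function.comp_apply, Equiv.symm_apply_apply, hrangeconj]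
        intro ⟨w, hw', hww⟩
        exact hlast b hb (eV.injective hww ▸ hw')
    · rintro a ⟨b, hb, rfl⟩
      obtain ⟨e, he, heu⟩ := huniq b hb
      refine ⟨e, List.mem_map_of_mem he, fun e' he' => ?_⟩
      obtain ⟨c, hc, hcb⟩ := List.mem_map.mp he'
      exact heu e' ((eA.injective hcb) ▸ hc)

end S2
namespace S2

variable {X : Type u1} {V : Type u2} {A : Type u3}

/-- sources in the enlarged network: arc `inl a` is the first half of `a`,
`inr (inl a)` the second half, `inr (inr a)` the pendant arc to the new leaf. -/
def srcp (N : PhyloNetwork X V A) : A ⊕ A ⊕ A → V ⊕ A ⊕ A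
  | .inl a => .inl (N.src a)
  | .inr (.inl a) => .inr (.inl a)
  | .inr (.inr a) => .inr (.inl a)

def tgtp (N : PhyloNetwork X V A) : A ⊕ A ⊕ A → V ⊕ A ⊕ A
  | .inl a => .inr (.inl a)
  | .inr (.inl a) => .inl (N.tgt a)
  | .inr (.inr a) => .inr (.inr a)

def leafp (N : PhyloNetwork X V A) : X ⊕ A → V ⊕ A ⊕ A
  | .inl x => .inl (N.leafEmb x)
  | .inr a => .inr (.inr a)

theorem midinj : Function.Injective (fun a : A => (Sum.inr (Sum.inl a) : V ⊕ A ⊕ A) ) :=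
  fun a b h => by simpa using h

theorem tgtp_set_inl (N : PhyloNetwork X V A) (u : V) :
    {e | tgtp N e = Sum.inl u} = (fun a => (Sum.inr (Sum.inl a) : A ⊕ A ⊕ A)) ''
      {a | N.tgt a = u} := by
  ext e; rcases e with a | a | a <;> simp [tgtp]

theorem tgtp_set_mid (N : PhyloNetwork X V A) (a : A) :
    {e | tgtp N e = Sum.inr (Sum.inl a)} = {Sum.inl a} := by
  ext e; rcases e with b | b | b <;> simp [tgtp]

theorem tgtp_set_leaf (N : PhyloNetwork X V A) (a : A) :
    {e | tgtp N e = Sum.inr (Sum.inr a)} = {Sum.inr (Sum.inr a)} := by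
  ext e; rcases e with b | b | b <;> simp [tgtp]

theorem srcp_set_inl (N : PhyloNetwork X V A) (u : V) :
    {e | srcp N e = Sum.inl u} = (fun a : A => (Sum.inl a : A ⊕ A ⊕ A)) ''
      {a | N.src a = u} := by
  ext e; rcases e with a | a | a <;> simp [srcp]

theorem srcp_set_mid (N : PhyloNetwork X V A) (a : A) :
    {e | srcp N e = Sum.inr (Sum.inl a)} =
      {Sum.inr (Sum.inl a), Sum.inr (Sum.inr a)} := by
  ext e; rcases e with b | b | b <;> simp [srcp]

theorem srcp_set_leaf (N : PhyloNetwork X V A) (a : A) :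
    {e | srcp N e = Sum.inr (Sum.inr a)} = ∅ := by
  ext e; rcases e with b | b | b <;> simp [srcp]

theorem inDeg_np_inl (N : PhyloNetwork X V A) (u : V) :
    InDeg (tgtp N) (Sum.inl u) = InDeg N.tgt u := by
  unfold InDeg
  rw [tgtp_set_inl, Set.ncard_image_of_injective _ midinj]

theorem inDeg_np_mid (N : PhyloNetwork X V A) (a : A) :
    InDeg (tgtp N) (Sum.inr (Sum.inl a)) = 1 := by
  unfold InDeg; rw [tgtp_set_mid]; exact Set.ncard_singleton _

theorem inDeg_np_leaf (N : PhyloNetwork X V A) (a : A) :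
    InDeg (tgtp N) (Sum.inr (Sum.inr a)) = 1 := by
  unfold InDeg; rw [tgtp_set_leaf]; exact Set.ncard_singleton _

theorem outDeg_np_inl (N : PhyloNetwork X V A) (u : V) :
    OutDeg (srcp N) (Sum.inl u) = OutDeg N.src u := by
  unfold OutDeg
  rw [srcp_set_inl, Set.ncard_image_of_injective _ Sum.inl_injective]

theorem outDeg_np_mid (N : PhyloNetwork X V A) (a : A) :
    OutDeg (srcp N) (Sum.inr (Sum.inl a)) = 2 := by
  unfold OutDeg; rw [srcp_set_mid]; exact Set.ncard_pair (by simp)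

theorem outDeg_np_leaf (N : PhyloNetwork X V A) (a : A) :
    OutDeg (srcp N) (Sum.inr (Sum.inr a)) = 0 := by
  unfold OutDeg; rw [srcp_set_leaf]; exact Set.ncard_empty _

/-- Projection of enlarged vertices back to `V`. -/
def projV (N : PhyloNetwork X V A) : V ⊕ A ⊕ A → V
  | .inl u => u
  | .inr (.inl a) => N.src a
  | .inr (.inr a) => N.tgt a

/-- Projection of walks in the enlarged network to walks in `N`. -/
def projL : List (A ⊕ A ⊕ A) → List A :=
  fun p => p.flatMap (fun e => match e with
    | .inl _ => []
    | .inr (.inl a) => [a]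
    | .inr (.inr a) => [a])

theorem proj_walk (N : PhyloNetwork X V A) {u v : V ⊕ A ⊕ A} {p : List (A ⊕ A ⊕ A)}
    (h : ArcWalk (srcp N) (tgtp N) u p v) :
    ArcWalk N.src N.tgt (projV N u) (projL p) (projV N v) := by
  induction h with
  | nil => exact ArcWalk.nil _
  | @cons u' w' e p' hs hwalk ih =>
    rcases e with a | a | a
    · subst hs
      simpa [projL, projV, srcp, tgtp] using ih
    · subst hs
      refine ArcWalk.cons (p := projL p') rfl ?_
      simpa [projL, projV, srcp, tgtp] using ih
    · subst hs
      refine ArcWalk.cons (p := projL p') rfl ?_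
      simpa [projL, projV, srcp, tgtp] using ih

theorem np_acyclic (N : PhyloNetwork X V A) :
    ∀ (v : V ⊕ A ⊕ A) (p : List (A ⊕ A ⊕ A)), p ≠ [] →
      ¬ ArcWalk (srcp N) (tgtp N) v p v := by
  intro v p hp hw
  cases p with
  | nil => exact hp rfl
  | cons e p' =>
    by_cases hproj : projL (e :: p') = []
    · have hall : ∀ f ∈ e :: p', ∃ a, f = Sum.inl a := by
        intro f hf
        rcases f with a | a | a
        · exact ⟨a, rfl⟩
        · exfalso
          have : a ∈ projL (e :: p') := List.mem_flatMap.mpr ⟨_, hf, by simp⟩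
          rw [hproj] at this; simp at this
        · exfalso
          have : a ∈ projL (e :: p') := List.mem_flatMap.mpr ⟨_, hf, by simp⟩
          rw [hproj] at this; simp at this
      obtain ⟨a, rfl⟩ := hall e (by simp)
      cases hw with
      | cons hs hw' =>
        cases p' with
        | nil =>
          cases hw'
          exact (by simp [srcp, tgtp] at hs)
        | cons e' q =>
          cases hw' with
          | cons hs' _ =>
            obtain ⟨b, rfl⟩ := hall e' (by simp)
            simp [srcp, tgtp] at hs'
    · exact N.acyclic (projV N v) (projL (e :: p')) hproj (proj_walk N hw)

theorem not_one_one (N : PhyloNetwork X V A) (u : V) :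
    ¬ (InDeg N.tgt u = 1 ∧ OutDeg N.src u = 1) := by
  rintro ⟨h1, h2⟩
  by_cases hr : u = N.root
  · subst hr
    rw [N.root_indeg] at h1
    exact absurd h1 (by norm_num)
  · by_cases hl : ∃ x, N.leafEmb x = u
    · have := (N.leaf_iff u).mp hl
      omega
    · rcases N.deg_other u hr hl with ⟨h, -⟩ | ⟨-, h⟩ <;> omega

theorem reach_leaf (N : PhyloNetwork X V A) (v : V) :
    ∃ (p : List A) (x : X), ArcWalk N.src N.tgt v p (N.leafEmb x) := by
  have : Finite V := N.finV
  induction v using (wf_succ N.acyclic).induction with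
  | _ v ih =>
    by_cases hl : ∃ x, N.leafEmb x = v
    · obtain ⟨x, rfl⟩ := hl; exact ⟨[], x, ArcWalk.nil _⟩
    · have hod : OutDeg N.src v ≠ 0 := fun h => hl ((N.leaf_iff v).mpr h)
      obtain ⟨a, ha⟩ : ({a | N.src a = v} : Set A).Nonempty :=
        Set.nonempty_of_ncard_ne_zero (by simpa [OutDeg] using hod)
      obtain ⟨p, x, hw⟩ := ih (N.tgt a) (Relation.TransGen.single ⟨a, rfl, ha⟩)
      exact ⟨a :: p, x, ArcWalk.cons ha hw⟩

theorem exists_in_arc (N : PhyloNetwork X V A) (u : V) (hu : u ≠ N.root) :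
    ∃ a, N.tgt a = u := by
  have : Finite A := N.finA
  have hne : InDeg N.tgt u ≠ 0 := by
    by_cases hl : ∃ x, N.leafEmb x = u
    · obtain ⟨x, rfl⟩ := hl; rw [N.leaf_indeg]; norm_num
    · rcases N.deg_other u hu hl with ⟨h, -⟩ | ⟨h, -⟩ <;> omega
  obtain ⟨a, ha⟩ : ({a | N.tgt a = u} : Set A).Nonempty :=
    Set.nonempty_of_ncard_ne_zero (by simpa [InDeg] using hne)
  exact ⟨a, ha⟩

theorem no_arc_to_root (N : PhyloNetwork X V A) (b : A) : N.tgt b ≠ N.root := by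
  intro hb
  have : Finite A := N.finA
  have h0 : ({a | N.tgt a = N.root} : Set A).ncard = 0 := by
    simpa [InDeg] using N.root_indeg
  have := (Set.ncard_eq_zero (Set.toFinite _)).mp h0
  exact absurd (show b ∈ ({a | N.tgt a = N.root} : Set A) from hb) (by rw [this]; simp)

end S2
namespace S2

variable {X : Type u1} {V : Type u2} {A : Type u3}

/-- The enlarged network: every arc of `N` subdivided, with a new leaf pendant
on each subdivision vertex. -/
def Np0 (N : PhyloNetwork X V A) :
    PhyloNetwork (X ⊕ A) (V ⊕ A ⊕ A) (A ⊕ A ⊕ A) where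
  src := srcp N
  tgt := tgtp N
  leafEmb := leafp N
  root := Sum.inl N.root
  finV := by have := N.finV; have := N.finA; infer_instance
  finA := by have := N.finA; infer_instance
  leafEmb_inj := by
    rintro (x | a) (y | b) h <;> simp [leafp] at h
    · rw [N.leafEmb_inj h]
    · rw [h]
  acyclic := np_acyclic N
  leaf_iff := by
    rintro (u | a | a)
    · rw [outDeg_np_inl, ← N.leaf_iff]
      constructor
      · rintro ⟨x | b, h⟩
        · exact ⟨x, by simpa [leafp] using h⟩
        · simp [leafp] at h
      · rintro ⟨x, h⟩
        exact ⟨Sum.inl x, by simp [leafp, h]⟩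
    · rw [outDeg_np_mid]
      constructor
      · rintro ⟨x | b, h⟩ <;> simp [leafp] at h
      · intro h; exact absurd h (by norm_num)
    · rw [outDeg_np_leaf]
      exact ⟨fun _ => rfl, fun _ => ⟨Sum.inr a, rfl⟩⟩
  leaf_indeg := by
    rintro (x | a)
    · show InDeg (tgtp N) (Sum.inl (N.leafEmb x)) = 1
      rw [inDeg_np_inl]; exact N.leaf_indeg x
    · exact inDeg_np_leaf N a
  root_indeg := by
    show InDeg (tgtp N) (Sum.inl N.root) = 0
    rw [inDeg_np_inl]; exact N.root_indeg
  root_unique := by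
    rintro (u | a | a) h
    · rw [inDeg_np_inl] at h
      rw [N.root_unique u h]
    · rw [inDeg_np_mid] at h; exact absurd h (by norm_num)
    · rw [inDeg_np_leaf] at h; exact absurd h (by norm_num)
  root_outdeg := by
    show OutDeg (srcp N) (Sum.inl N.root) = 1 ∨ OutDeg (srcp N) (Sum.inl N.root) = 2
    rw [outDeg_np_inl]; exact N.root_outdeg
  deg_other := by
    rintro (u | a | a) hne hnl
    · rw [inDeg_np_inl, outDeg_np_inl]
      refine N.deg_other u (fun h => hne (by rw [h])) (fun ⟨x, hx⟩ => hnl ?_)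
      exact ⟨Sum.inl x, by simp [leafp, hx]⟩
    · rw [inDeg_np_mid, outDeg_np_mid]
      exact Or.inr ⟨rfl, rfl⟩
    · exact absurd ⟨Sum.inr a, rfl⟩ hnl

/-- A choice of incoming arc for each vertex of `N`. -/
noncomputable def pickFun (N : PhyloNetwork X V A) : V → Option A :=
  fun v => open Classical in if h : ∃ a, N.tgt a = v then some h.choose else none

theorem pickFun_spec (N : PhyloNetwork X V A) {v : V} (h : ∃ a, N.tgt a = v) :
    ∃ a, pickFun N v = some a ∧ N.tgt a = v := by
  refine ⟨h.choose, ?_, h.choose_spec⟩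
  classical simp [pickFun, h]

/-- The support tree: both halves of every subdivided arc whose second half is the
chosen incoming arc of its endpoint, all first halves, and all pendant arcs. -/
def ST (N : PhyloNetwork X V A) : Set (A ⊕ A ⊕ A) :=
  {e | ∀ b, e = Sum.inr (Sum.inl b) → pickFun N (N.tgt b) = some b}

theorem F_mem_ST (N : PhyloNetwork X V A) (a : A) : (Sum.inl a : A ⊕ A ⊕ A) ∈ ST N := by
  intro b h; exact absurd h (by simp)

theorem La_mem_ST (N : PhyloNetwork X V A) (a : A) :
    (Sum.inr (Sum.inr a) : A ⊕ A ⊕ A) ∈ ST N := by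
  intro b h; exact absurd h (by simp)

theorem Sa_mem_ST_iff (N : PhyloNetwork X V A) (a : A) :
    (Sum.inr (Sum.inl a) : A ⊕ A ⊕ A) ∈ ST N ↔ pickFun N (N.tgt a) = some a := by
  constructor
  · intro h; exact h a rfl
  · intro h b hb
    obtain rfl : a = b := by simpa using hb
    exact h

theorem st_unique_in (N : PhyloNetwork X V A) :
    ∀ v : V ⊕ A ⊕ A, v ≠ Sum.inl N.root →
      ∃! e : A ⊕ A ⊕ A, e ∈ ST N ∧ tgtp N e = v := by
  rintro (u | a | a) hv
  · have hu : u ≠ N.root := fun h => hv (by rw [h])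
    obtain ⟨a0, hpick, hta0⟩ := pickFun_spec N (exists_in_arc N u hu)
    refine ⟨Sum.inr (Sum.inl a0),
      ⟨(Sa_mem_ST_iff N a0).mpr (by rw [hta0]; exact hpick), by simp [tgtp, hta0]⟩, ?_⟩
    rintro (b | b | b) ⟨heS, het⟩
    · simp [tgtp] at het
    · have htb : N.tgt b = u := by simpa [tgtp] using het
      have hpb := (Sa_mem_ST_iff N b).mp heS
      rw [htb, hpick] at hpb
      obtain rfl : a0 = b := by injection hpb
      rfl
    · simp [tgtp] at het
  · refine ⟨Sum.inl a, ⟨F_mem_ST N a, rfl⟩, ?_⟩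
    rintro (b | b | b) ⟨-, het⟩
    · obtain rfl : b = a := by simpa [tgtp] using het
      rfl
    · simp [tgtp] at het
    · simp [tgtp] at het
  · refine ⟨Sum.inr (Sum.inr a), ⟨La_mem_ST N a, rfl⟩, ?_⟩
    rintro (b | b | b) ⟨-, het⟩
    · simp [tgtp] at het
    · simp [tgtp] at het
    · obtain rfl : b = a := by simpa [tgtp] using het
      rfl

theorem st_no_root (N : PhyloNetwork X V A) :
    ∀ e ∈ ST N, tgtp N e ≠ Sum.inl N.root := by
  rintro (b | b | b) - h
  · simp [tgtp] at h
  · exact no_arc_to_root N b (by simpa [tgtp] using h)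
  · simp [tgtp] at h

theorem outDegIn_ST_inl (N : PhyloNetwork X V A) (u : V) :
    OutDegIn (srcp N) (ST N) (Sum.inl u) = OutDeg N.src u := by
  unfold OutDegIn OutDeg
  rw [show {e | e ∈ ST N ∧ srcp N e = Sum.inl u} =
      (fun a : A => (Sum.inl a : A ⊕ A ⊕ A)) '' {a | N.src a = u} from ?_,
    Set.ncard_image_of_injective _ Sum.inl_injective]
  ext e; rcases e with a | a | a <;> simp [srcp, F_mem_ST]

theorem outDegIn_ST_mid (N : PhyloNetwork X V A) (a : A) :
    OutDegIn (srcp N) (ST N) (Sum.inr (Sum.inl a)) ≠ 0 := by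
  have : Finite A := N.finA
  intro h
  have hmem : (Sum.inr (Sum.inr a) : A ⊕ A ⊕ A) ∈
      {e | e ∈ ST N ∧ srcp N e = Sum.inr (Sum.inl a)} := ⟨La_mem_ST N a, rfl⟩
  have := (Set.ncard_eq_zero (Set.toFinite _)).mp (by simpa [OutDegIn] using h)
  rw [this] at hmem; simp at hmem

theorem outDegIn_ST_leaf (N : PhyloNetwork X V A) (a : A) :
    OutDegIn (srcp N) (ST N) (Sum.inr (Sum.inr a)) = 0 := by
  unfold OutDegIn
  rw [show {e | e ∈ ST N ∧ srcp N e = Sum.inr (Sum.inr a)} = (∅ : Set (A ⊕ A ⊕ A))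
    from ?_]
  · exact Set.ncard_empty _
  ext e; rcases e with b | b | b <;> simp [srcp]

theorem np0_treeBased (N : PhyloNetwork X V A) : (Np0 N).TreeBased := by
  have : Finite V := N.finV
  have : Finite A := N.finA
  refine ⟨ST N, isRootedTree_of_unique_in (np_acyclic N) (st_unique_in N) (st_no_root N),
    ?_⟩
  rintro (u | a | a)
  · rw [show OutDegIn (Np0 N).src (ST N) (Sum.inl u) = OutDeg N.src u from
      outDegIn_ST_inl N u, ← N.leaf_iff]
    constructor
    · rintro ⟨x, hx⟩
      exact ⟨Sum.inl x, by simp [Np0, leafp, hx]⟩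
    · rintro ⟨x | b, h⟩
      · exact ⟨x, by simpa [Np0, leafp] using h⟩
      · simp [Np0, leafp] at h
  · constructor
    · intro h
      exact absurd h (outDegIn_ST_mid N a)
    · rintro ⟨x | b, h⟩ <;> simp [Np0, leafp] at h
  · constructor
    · intro _
      exact ⟨Sum.inr a, rfl⟩
    · intro _
      exact outDegIn_ST_leaf N a

end S2
namespace S2

variable {X : Type u1} {V : Type u2} {A : Type u3}

/-- The leaves of the enlarged network labelled by original labels. -/
def L0 (N : PhyloNetwork X V A) : Set (V ⊕ A ⊕ A) :=
  {v | ∃ x : X, v = leafp N (Sum.inl x)}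

theorem lift_walk (N : PhyloNetwork X V A) {u v : V} {p : List A}
    (h : ArcWalk N.src N.tgt u p v) :
    ArcWalk (srcp N) (tgtp N) (Sum.inl u)
      (p.flatMap fun a => [Sum.inl a, Sum.inr (Sum.inl a)]) (Sum.inl v) := by
  induction h with
  | nil => exact ArcWalk.nil _
  | @cons u' w' a p' hs _ ih =>
    exact ArcWalk.cons (by simp [srcp, hs]) (ArcWalk.cons rfl ih)

theorem inl_mem_keepV (N : PhyloNetwork X V A) (u : V) :
    (Sum.inl u : V ⊕ A ⊕ A) ∈ KeepV (Np0 N) (L0 N) := by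
  obtain ⟨p, x, hw⟩ := reach_leaf N u
  exact ⟨_, Sum.inl (N.leafEmb x), ⟨x, rfl⟩, lift_walk N hw⟩

theorem mid_mem_keepV (N : PhyloNetwork X V A) (a : A) :
    (Sum.inr (Sum.inl a) : V ⊕ A ⊕ A) ∈ KeepV (Np0 N) (L0 N) := by
  obtain ⟨p, x, hw⟩ := reach_leaf N (N.tgt a)
  exact ⟨_, Sum.inl (N.leafEmb x), ⟨x, rfl⟩,
    ArcWalk.cons (a := Sum.inr (Sum.inl a)) rfl (lift_walk N hw)⟩

theorem leafvert_not_keepV (N : PhyloNetwork X V A) (a : A) :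
    (Sum.inr (Sum.inr a) : V ⊕ A ⊕ A) ∉ KeepV (Np0 N) (L0 N) := by
  rintro ⟨p, w, ⟨x, rfl⟩, hw⟩
  cases hw with
  | cons hs _ =>
    rename_i e _ _
    rcases e with b | b | b <;> simp [Np0, srcp] at hs

theorem keepA_eq (N : PhyloNetwork X V A) :
    KeepA (Np0 N) (L0 N) = {e | ∃ a, e = Sum.inl a ∨ e = Sum.inr (Sum.inl a)} := by
  have hiff : ∀ e : A ⊕ A ⊕ A, e ∈ KeepA (Np0 N) (L0 N) ↔
      (Np0 N).tgt e ∈ KeepV (Np0 N) (L0 N) := fun e => Iff.rfl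
  ext e
  rw [hiff]
  rcases e with a | a | a
  · exact ⟨fun _ => ⟨a, Or.inl rfl⟩, fun _ => mid_mem_keepV N a⟩
  · exact ⟨fun _ => ⟨a, Or.inr rfl⟩, fun _ => inl_mem_keepV N (N.tgt a)⟩
  · constructor
    · intro h; exact absurd h (leafvert_not_keepV N a)
    · rintro ⟨b, hb | hb⟩ <;> simp at hb

theorem inDegIn_keepA_inl (N : PhyloNetwork X V A) (u : V) :
    InDegIn (tgtp N) (KeepA (Np0 N) (L0 N)) (Sum.inl u) = InDeg N.tgt u := by
  unfold InDegIn InDeg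
  rw [keepA_eq]
  rw [show {a_1 | a_1 ∈ {e | ∃ a, e = Sum.inl a ∨ e = Sum.inr (Sum.inl a)} ∧
      tgtp N a_1 = Sum.inl u} =
    (fun a : A => (Sum.inr (Sum.inl a) : A ⊕ A ⊕ A)) '' {a | N.tgt a = u} from ?_,
    Set.ncard_image_of_injective _ midinj]
  ext e; rcases e with b | b | b <;> simp [tgtp]

theorem outDegIn_keepA_inl (N : PhyloNetwork X V A) (u : V) :
    OutDegIn (srcp N) (KeepA (Np0 N) (L0 N)) (Sum.inl u) = OutDeg N.src u := by
  unfold OutDegIn OutDeg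
  rw [keepA_eq]
  rw [show {a_1 | a_1 ∈ {e | ∃ a, e = Sum.inl a ∨ e = Sum.inr (Sum.inl a)} ∧
      srcp N a_1 = Sum.inl u} =
    (fun a : A => (Sum.inl a : A ⊕ A ⊕ A)) '' {a | N.src a = u} from ?_,
    Set.ncard_image_of_injective _ Sum.inl_injective]
  ext e; rcases e with b | b | b <;> simp [srcp]

theorem inDegIn_keepA_mid (N : PhyloNetwork X V A) (a : A) :
    InDegIn (tgtp N) (KeepA (Np0 N) (L0 N)) (Sum.inr (Sum.inl a)) = 1 := by
  unfold InDegIn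
  rw [keepA_eq]
  rw [show {a_1 | a_1 ∈ {e | ∃ b, e = Sum.inl b ∨ e = Sum.inr (Sum.inl b)} ∧
      tgtp N a_1 = Sum.inr (Sum.inl a)} = {(Sum.inl a : A ⊕ A ⊕ A)} from ?_]
  · exact Set.ncard_singleton _
  ext e; rcases e with b | b | b <;> simp [tgtp]

theorem outDegIn_keepA_mid (N : PhyloNetwork X V A) (a : A) :
    OutDegIn (srcp N) (KeepA (Np0 N) (L0 N)) (Sum.inr (Sum.inl a)) = 1 := by
  unfold OutDegIn
  rw [keepA_eq]
  rw [show {a_1 | a_1 ∈ {e | ∃ b, e = Sum.inl b ∨ e = Sum.inr (Sum.inl b)} ∧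
      srcp N a_1 = Sum.inr (Sum.inl a)} = {(Sum.inr (Sum.inl a) : A ⊕ A ⊕ A)} from ?_]
  · exact Set.ncard_singleton _
  ext e; rcases e with b | b | b <;> simp [srcp]

theorem subdiv0 (N : PhyloNetwork X V A) :
    SubdivOn (srcp N) (tgtp N) (KeepV (Np0 N) (L0 N)) (KeepA (Np0 N) (L0 N))
      N.src N.tgt Sum.inl := by
  refine ⟨Sum.inl_injective, inl_mem_keepV N, ?_, ?_, ?_⟩
  · intro e he
    rw [keepA_eq] at he
    obtain ⟨a, rfl | rfl⟩ := he
    · exact ⟨inl_mem_keepV N (N.src a), mid_mem_keepV N a⟩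
    · exact ⟨mid_mem_keepV N a, inl_mem_keepV N (N.tgt a)⟩
  · rintro (u | a | a) hv
    · rw [inDegIn_keepA_inl, outDegIn_keepA_inl]
      exact ⟨fun _ => not_one_one N u, fun _ => ⟨u, rfl⟩⟩
    · rw [inDegIn_keepA_mid, outDegIn_keepA_mid]
      constructor
      · rintro ⟨u, hu⟩; simp at hu
      · intro h; exact absurd ⟨rfl, rfl⟩ h
    · exact absurd hv (leafvert_not_keepV N a)
  · refine ⟨fun a => [Sum.inl a, Sum.inr (Sum.inl a)], fun a => ?_, ?_⟩
    · refine ⟨by simp, by simp, ?_, ?_, ?_⟩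
      · intro e he
        rw [keepA_eq]
        rcases List.mem_pair.mp he with rfl | rfl
        · exact ⟨a, Or.inl rfl⟩
        · exact ⟨a, Or.inr rfl⟩
      · exact ArcWalk.cons rfl (ArcWalk.cons rfl (ArcWalk.nil _))
      · intro e he
        rw [show ([Sum.inl a, Sum.inr (Sum.inl a)] : List (A ⊕ A ⊕ A)).dropLast =
          [Sum.inl a] from rfl] at he
        obtain rfl := List.mem_singleton.mp he
        rintro ⟨u, hu⟩
        simp [tgtp] at hu
    · intro e he
      rw [keepA_eq] at he
      obtain ⟨a, rfl | rfl⟩ := he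
      · refine ⟨a, by simp, ?_⟩
        intro b hb
        rcases List.mem_pair.mp hb with h | h <;> simp at h
        · exact h.symm
      · refine ⟨a, by simp, ?_⟩
        intro b hb
        rcases List.mem_pair.mp hb with h | h <;> simp at h
        · exact h.symm

end S2
namespace S2

variable {X1 : Type u1} {V1 : Type u2} {A1 : Type u3}
variable {Xq : Type u4} {Vq : Type u5} {Aq : Type u6}

theorem exists_conj_iff {f : X1 → V1} (eX : X1 ≃ Xq) (eV : V1 ≃ Vq) (v : Vq) :
    (∃ x, (eV ∘ f ∘ eX.symm) x = v) ↔ ∃ x1, f x1 = eV.symm v := by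
  constructor
  · rintro ⟨x, hx⟩
    exact ⟨eX.symm x, eV.eq_symm_apply.mpr hx⟩
  · rintro ⟨x1, hx⟩
    exact ⟨eX x1, by simp [hx]⟩

/-- Transport of a phylogenetic network along equivalences of its three types. -/
def conjNet (M : PhyloNetwork X1 V1 A1) (eX : X1 ≃ Xq) (eV : V1 ≃ Vq) (eA : A1 ≃ Aq) :
    PhyloNetwork Xq Vq Aq where
  src := eV ∘ M.src ∘ eA.symm
  tgt := eV ∘ M.tgt ∘ eA.symm
  leafEmb := eV ∘ M.leafEmb ∘ eX.symm
  root := eV M.root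
  finV := by have := M.finV; exact Finite.of_equiv _ eV
  finA := by have := M.finA; exact Finite.of_equiv _ eA
  leafEmb_inj := eV.injective.comp (M.leafEmb_inj.comp eX.symm.injective)
  acyclic := by
    intro v p hp hw
    exact M.acyclic _ _ (by simpa using hp) (arcWalk_conj_back eV eA hw)
  leaf_iff := by
    intro v
    rw [outDeg_conj, exists_conj_iff eX eV v]
    exact M.leaf_iff (eV.symm v)
  leaf_indeg := by
    intro x
    rw [show (eV ∘ M.leafEmb ∘ eX.symm) x = eV (M.leafEmb (eX.symm x)) from rfl,
      inDeg_conj]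
    simpa using M.leaf_indeg (eX.symm x)
  root_indeg := by
    rw [inDeg_conj]
    simpa using M.root_indeg
  root_unique := by
    intro v h
    rw [inDeg_conj] at h
    exact (Equiv.symm_apply_eq eV).mp (M.root_unique _ h)
  root_outdeg := by
    rw [outDeg_conj]
    simpa using M.root_outdeg
  deg_other := by
    intro v hv hl
    rw [inDeg_conj, outDeg_conj]
    refine M.deg_other (eV.symm v) (fun h => hv ?_) (fun ⟨x1, h⟩ => hl ?_)
    · rw [← h]; simp
    · exact ⟨eX x1, by simp [h]⟩

theorem mem_leaves_conj (M : PhyloNetwork X1 V1 A1) (eX : X1 ≃ Xq) (eV : V1 ≃ Vq)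
    (eA : A1 ≃ Aq) (v : Vq) :
    v ∈ (conjNet M eX eV eA).leaves ↔ eV.symm v ∈ M.leaves := by
  show (∃ x, (eV ∘ M.leafEmb ∘ eX.symm) x = v) ↔ _
  rw [exists_conj_iff eX eV v]
  exact Iff.rfl

theorem treeBased_conj (M : PhyloNetwork X1 V1 A1) (eX : X1 ≃ Xq) (eV : V1 ≃ Vq)
    (eA : A1 ≃ Aq) (h : M.TreeBased) : (conjNet M eX eV eA).TreeBased := by
  obtain ⟨S, h1, h2⟩ := h
  refine ⟨eA '' S, isRootedTree_conj eV eA h1, ?_⟩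
  intro v
  rw [show (conjNet M eX eV eA).src = eV ∘ M.src ∘ eA.symm from rfl,
    outDegIn_conj, mem_leaves_conj]
  exact h2 (eV.symm v)

theorem conjNet_src (M : PhyloNetwork X1 V1 A1) (eX : X1 ≃ Xq) (eV : V1 ≃ Vq)
    (eA : A1 ≃ Aq) (e : Aq) : (conjNet M eX eV eA).src e = eV (M.src (eA.symm e)) := rfl

theorem conjNet_tgt (M : PhyloNetwork X1 V1 A1) (eX : X1 ≃ Xq) (eV : V1 ≃ Vq)
    (eA : A1 ≃ Aq) (e : Aq) : (conjNet M eX eV eA).tgt e = eV (M.tgt (eA.symm e)) := rfl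

theorem conjNet_leafEmb (M : PhyloNetwork X1 V1 A1) (eX : X1 ≃ Xq) (eV : V1 ≃ Vq)
    (eA : A1 ≃ Aq) (x : Xq) :
    (conjNet M eX eV eA).leafEmb x = eV (M.leafEmb (eX.symm x)) := rfl

theorem keepV_conj (M : PhyloNetwork X1 V1 A1) (eX : X1 ≃ Xq) (eV : V1 ≃ Vq)
    (eA : A1 ≃ Aq) (L : Set V1) :
    KeepV (conjNet M eX eV eA) (eV '' L) = eV '' KeepV M L := by
  ext v
  constructor
  · rintro ⟨p, w, hwL, hw⟩
    have hw' := arcWalk_conj_back eV eA hw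
    obtain ⟨w0, hw0L, rfl⟩ := hwL
    refine ⟨eV.symm v, ⟨p.map eA.symm, w0, hw0L, ?_⟩, by simp⟩
    simpa using hw'
  · rintro ⟨v0, ⟨p, w, hwL, hw⟩, rfl⟩
    exact ⟨p.map eA, eV w, Set.mem_image_of_mem _ hwL, arcWalk_conj eV eA hw⟩

theorem keepA_conj (M : PhyloNetwork X1 V1 A1) (eX : X1 ≃ Xq) (eV : V1 ≃ Vq)
    (eA : A1 ≃ Aq) (L : Set V1) :
    KeepA (conjNet M eX eV eA) (eV '' L) = eA '' KeepA M L := by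
  ext e
  constructor
  · rintro ⟨p, w, hwL, hw⟩
    have hw' := arcWalk_conj_back eV eA hw
    obtain ⟨w0, hw0L, rfl⟩ := hwL
    refine ⟨eA.symm e, ⟨p.map eA.symm, w0, hw0L, ?_⟩, by simp⟩
    rw [conjNet_tgt, Equiv.symm_apply_apply] at hw'
    simpa using hw'
  · rintro ⟨e0, ⟨p, w, hwL, hw⟩, rfl⟩
    refine ⟨p.map eA, eV w, Set.mem_image_of_mem _ hwL, ?_⟩
    rw [conjNet_tgt, Equiv.symm_apply_apply]
    exact arcWalk_conj eV eA hw

end S2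

/-- Every binary phylogenetic network `N` over `X` is the restriction
`N⁺|X` of some tree-based binary phylogenetic network `N⁺` over a larger leaf set
`X⁺ ⊇ X`: deleting from `N⁺` all vertices and arcs not lying on a directed path
ending at a leaf in `X`, and suppressing all resulting in-degree-1 out-degree-1
vertices, yields exactly `N`. -/
theorem statement_2 {X : Type u1} {V : Type u2} {A : Type u3} (N : PhyloNetwork X V A) :
    ∃ (Xp Vp Ap : Type) (j : X → Xp) (Np : PhyloNetwork Xp Vp Ap),
      Function.Injective j ∧
      Np.TreeBased ∧
      ∃ φV : V → Vp,
        SubdivOn Np.src Np.tgt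
          (KeepV Np {v : Vp | ∃ x : X, v = Np.leafEmb (j x)})
          (KeepA Np {v : Vp | ∃ x : X, v = Np.leafEmb (j x)})
          N.src N.tgt φV ∧
        φV N.root = Np.root ∧
        (∀ x : X, φV (N.leafEmb x) = Np.leafEmb (j x)) := by
  classical
  haveI : Finite V := N.finV
  haveI : Finite A := N.finA
  haveI : Finite X := Finite.of_injective N.leafEmb N.leafEmb_inj
  let eX := equivShrink.{0} (X ⊕ A)
  let eV := equivShrink.{0} (V ⊕ A ⊕ A)
  let eA := equivShrink.{0} (A ⊕ A ⊕ A)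
  refine ⟨Shrink.{0} (X ⊕ A), Shrink.{0} (V ⊕ A ⊕ A), Shrink.{0} (A ⊕ A ⊕ A),
    eX ∘ Sum.inl, S2.conjNet (S2.Np0 N) eX eV eA,
    eX.injective.comp Sum.inl_injective,
    S2.treeBased_conj _ eX eV eA (S2.np0_treeBased N), eV ∘ Sum.inl, ?_, rfl, ?_⟩
  · have hL : {v | ∃ x : X, v = (S2.conjNet (S2.Np0 N) eX eV eA).leafEmb
        ((eX ∘ Sum.inl) x)} = eV '' S2.L0 N := by
      ext v
      simp only [Set.mem_setOf_eq, Set.mem_image, S2.L0]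
      constructor
      · rintro ⟨x, rfl⟩
        refine ⟨S2.leafp N (Sum.inl x), ⟨x, rfl⟩, ?_⟩
        rw [S2.conjNet_leafEmb, Function.comp_apply, Equiv.symm_apply_apply]
        rfl
      · rintro ⟨w, ⟨x, rfl⟩, rfl⟩
        refine ⟨x, ?_⟩
        rw [S2.conjNet_leafEmb, Function.comp_apply, Equiv.symm_apply_apply]
        rfl
    rw [hL, S2.keepV_conj, S2.keepA_conj]
    exact S2.subdivOn_conj eV eA (S2.subdiv0 N)
  · intro x
    show eV (Sum.inl (N.leafEmb x)) =
      (eV ∘ (S2.Np0 N).leafEmb ∘ eX.symm) (eX (Sum.inl x))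
    simp only [Function.comp_apply, Equiv.symm_apply_apply]
    rfl
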